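/- Let D and L be independent integrable nonnegative random variables with right-unbounded support, and {L_n} i.i.d. copies of L independent of D. Define τ = inf{k≥0 : L_k > D} and the checkpointing time T^C = Σ_{i=0}^{τ} L_i. Then E[T^C] = E[L] · ∫_0^∞ (1 / P[L>z]) f_D(dz), where f_D is the distribution of D. -/

import Mathlib

open MeasureTheory ProbabilityTheory Filter Set
open scoped ENNReal NNReal Topology

private lemma measC (i : ℕ) : MeasurableSet {p : ℝ × (Fin i → ℝ) | ∀ j, p.2 j ≤ p.1} := by
  have : {p : ℝ × (Fin i → ℝ) | ∀ j, p.2 j ≤ p.1}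
      = ⋂ j, {p : ℝ × (Fin i → ℝ) | p.2 j ≤ p.1} := by
    ext p; simp [mem_iInter]
  rw [this]
  exact MeasurableSet.iInter fun j =>
    measurableSet_le (measurable_snd.eval) measurable_fst

/-- Expected checkpointing time formula:
`E[T^C] = E[L] · ∫₀^∞ (1 / P[L>z]) f_D(dz)`. -/
theorem checkpoint_expected_time
    {Ω : Type*} [MeasurableSpace Ω] (P : Measure Ω) [IsProbabilityMeasure P]
    (D L0 : Ω → ℝ) (L : ℕ → Ω → ℝ)
    (hDmeas : Measurable D) (hL0meas : Measurable L0) (hLmeas : ∀ n, Measurable (L n))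
    (hDnn : ∀ ω, 0 ≤ D ω) (hL0nn : ∀ ω, 0 ≤ L0 ω) (hLnn : ∀ n ω, 0 ≤ L n ω)
    (hDint : Integrable D P) (hL0int : Integrable L0 P)
    (hDsupp : ∀ x : ℝ, 0 ≤ x → 0 < P {ω | x < D ω})
    (hLsupp : ∀ x : ℝ, 0 ≤ x → 0 < P {ω | x < L0 ω})
    (hid : ∀ n, IdentDistrib (L n) L0 P P)
    (hindep : iIndepFun (β := fun _ : Option ℕ => ℝ)
        (fun i => Option.elim i D L) P)
    (τ : Ω → ℕ) (hτ : ∀ ω, τ ω = sInf {k : ℕ | D ω < L k ω})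
    (T : Ω → ℝ) (hT : ∀ ω, T ω = ∑ i ∈ Finset.range (τ ω + 1), L i ω) :
    ∫⁻ ω, ENNReal.ofReal (T ω) ∂P
      = (∫⁻ ω, ENNReal.ofReal (L0 ω) ∂P)
        * ∫⁻ z, (P {ω | z < L0 ω})⁻¹ ∂(P.map D) := by
  classical
  have hmeasElim : ∀ k : Option ℕ, Measurable (Option.elim k D L) := by
    rintro (_ | n); exacts [hDmeas, hLmeas n]
  set q : ℝ → ℝ≥0∞ := fun z => P {ω | L0 ω ≤ z} with hq
  have hqmono : Monotone q := fun a b hab =>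
    measure_mono (fun ω (h : L0 ω ≤ a) => le_trans h hab)
  have hqmeas : Measurable q := hqmono.measurable
  have hqle : ∀ z, q z ≤ 1 := fun z => prob_le_one
  have hcompl : ∀ z : ℝ, {ω | L0 ω ≤ z} = {ω | z < L0 ω}ᶜ := by
    intro z; ext ω; simp [not_lt]
  have hqlt : ∀ z : ℝ, 0 ≤ z → q z < 1 := by
    intro z hz
    have : q z = 1 - P {ω | z < L0 ω} := by
      show P {ω | L0 ω ≤ z} = _
      rw [hcompl z]
      exact prob_compl_eq_one_sub (hL0meas measurableSet_Ioi)
    rw [this]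
    exact ENNReal.sub_lt_self ENNReal.one_ne_top one_ne_zero (hLsupp z hz).ne'
  set A : ℕ → Set Ω := fun i => {ω | ∀ j < i, L j ω ≤ D ω} with hA
  have hAmeas : ∀ i, MeasurableSet (A i) := by
    intro i
    have : A i = ⋂ (j : ℕ) (_ : j < i), {ω | L j ω ≤ D ω} := by
      ext ω; simp [hA, mem_iInter]
    rw [this]
    exact MeasurableSet.iInter fun j => MeasurableSet.iInter fun _ =>
      measurableSet_le (hLmeas j) hDmeas
  -- Key computation A: P (A i) = ∫ q^i dμD
  have keyA : ∀ i : ℕ, P (A i) = ∫⁻ z, (q z) ^ i ∂(P.map D) := by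
    intro i
    set W : Ω → (Fin i → ℝ) := fun ω j => L j ω with hW
    have hWmeas : Measurable W := measurable_pi_lambda _ fun j => hLmeas j
    have hindDW : IndepFun D W P := by
      have h := hindep.indepFun_finset {none} ((Finset.range i).image some)
        (by simp [Finset.disjoint_left]) hmeasElim
      exact h.comp
        (show Measurable fun v : ({none} : Finset (Option ℕ)) → ℝ =>
            v ⟨none, Finset.mem_singleton_self _⟩ from measurable_pi_apply _)
        (show Measurable fun v : (((Finset.range i).image some : Finset (Option ℕ))) → ℝ =>
            (fun j : Fin i => v ⟨some j, Finset.mem_image_of_mem _ (Finset.mem_range.mpr j.2)⟩)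
          from measurable_pi_lambda _ fun j => measurable_pi_apply _)
    have hAeq : A i = (fun ω => (D ω, W ω)) ⁻¹' {p : ℝ × (Fin i → ℝ) | ∀ j, p.2 j ≤ p.1} := by
      ext ω
      constructor
      · intro h j; exact h j j.2
      · intro h j hj; exact h ⟨j, hj⟩
    have hmap := (indepFun_iff_map_prod_eq_prod_map_map hDmeas.aemeasurable
      hWmeas.aemeasurable).mp hindDW
    calc P (A i)
        = (P.map (fun ω => (D ω, W ω))) {p : ℝ × (Fin i → ℝ) | ∀ j, p.2 j ≤ p.1} := by
          rw [Measure.map_apply (hDmeas.prodMk hWmeas) (measC i), hAeq]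
      _ = ((P.map D).prod (P.map W)) {p : ℝ × (Fin i → ℝ) | ∀ j, p.2 j ≤ p.1} := by rw [hmap]
      _ = ∫⁻ z, (P.map W) (Prod.mk z ⁻¹' {p : ℝ × (Fin i → ℝ) | ∀ j, p.2 j ≤ p.1}) ∂(P.map D) :=
          Measure.prod_apply (measC i)
      _ = ∫⁻ z, (q z) ^ i ∂(P.map D) := by
          apply lintegral_congr
          intro z
          have hpre : Prod.mk z ⁻¹' {p : ℝ × (Fin i → ℝ) | ∀ j, p.2 j ≤ p.1}
              = {v : Fin i → ℝ | ∀ j, v j ≤ z} := rfl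
          have hmz : MeasurableSet {v : Fin i → ℝ | ∀ j, v j ≤ z} := by
            have : {v : Fin i → ℝ | ∀ j, v j ≤ z} = ⋂ j, {v : Fin i → ℝ | v j ≤ z} := by
              ext v; simp [mem_iInter]
            rw [this]
            exact MeasurableSet.iInter fun j =>
              measurableSet_le (measurable_pi_apply j) measurable_const
          rw [hpre, Measure.map_apply hWmeas hmz]
          have hset : W ⁻¹' {v : Fin i → ℝ | ∀ j, v j ≤ z}
              = ⋂ k ∈ (Finset.range i).image some, (Option.elim k D L) ⁻¹' Iic z := by
            ext ω
            simp only [mem_preimage, mem_setOf_eq, mem_iInter, Finset.mem_image,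
              Finset.mem_range, mem_Iic, forall_exists_index, and_imp]
            constructor
            · rintro h k j hj rfl; exact h ⟨j, hj⟩
            · intro h j; exact h (some j) j j.2 rfl
          rw [hset,
            hindep.measure_inter_preimage_eq_mul ((Finset.range i).image some)
              (sets := fun _ => Iic z) (fun k _ => measurableSet_Iic),
            Finset.prod_image (fun x _ y _ h => Option.some_injective _ h)]
          have hterm : ∀ j : ℕ, P ((L j) ⁻¹' Iic z) = q z := fun j =>
            (hid j).measure_mem_eq measurableSet_Iic
          calc ∏ j ∈ Finset.range i, P ((Option.elim (some j) D L) ⁻¹' Iic z)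
              = ∏ j ∈ Finset.range i, q z := Finset.prod_congr rfl fun j _ => hterm j
            _ = (q z) ^ i := by rw [Finset.prod_const, Finset.card_range]
  -- Key computation B
  have keyB : ∀ i : ℕ, ∫⁻ ω, (A i).indicator (fun ω => ENNReal.ofReal (L i ω)) ω ∂P
      = (∫⁻ ω, ENNReal.ofReal (L0 ω) ∂P) * P (A i) := by
    intro i
    set V : Ω → ℝ × (Fin i → ℝ) := fun ω => (D ω, fun j : Fin i => L j ω) with hV
    have hVmeas : Measurable V :=
      hDmeas.prodMk (measurable_pi_lambda _ fun j => hLmeas j)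
    have hindLV : IndepFun (L i) V P := by
      have hdisj : Disjoint ({some i} : Finset (Option ℕ))
          (insert none ((Finset.range i).image some)) := by
        simp only [Finset.disjoint_left, Finset.mem_singleton]
        rintro a rfl
        simp only [Finset.mem_insert, Finset.mem_image, Finset.mem_range, not_or]
        refine ⟨by simp, ?_⟩
        rintro ⟨x, hx, hxe⟩
        exact absurd (Option.some_injective _ hxe) hx.ne
      have h := hindep.indepFun_finset {some i}
        (insert none ((Finset.range i).image some)) hdisj hmeasElim
      exact h.comp
        (show Measurable fun v : ({some i} : Finset (Option ℕ)) → ℝ =>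
            v ⟨some i, Finset.mem_singleton_self _⟩ from measurable_pi_apply _)
        (show Measurable fun v : ((insert none ((Finset.range i).image some) :
              Finset (Option ℕ))) → ℝ =>
            (v ⟨none, Finset.mem_insert_self _ _⟩,
              fun j : Fin i => v ⟨some j, Finset.mem_insert_of_mem
                (Finset.mem_image_of_mem _ (Finset.mem_range.mpr j.2))⟩)
          from (measurable_pi_apply _).prodMk
            (measurable_pi_lambda _ fun j => measurable_pi_apply _))
    set C : Set (ℝ × (Fin i → ℝ)) := {p | ∀ j, p.2 j ≤ p.1} with hCdef
    have hAeq : A i = V ⁻¹' C := by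
      ext ω
      constructor
      · intro h j; exact h j j.2
      · intro h j hj; exact h ⟨j, hj⟩
    have hind2 : IndepFun (fun ω => ENNReal.ofReal (L i ω))
        (fun ω => C.indicator (fun _ => (1 : ℝ≥0∞)) (V ω)) P :=
      hindLV.comp ENNReal.measurable_ofReal (measurable_const.indicator (measC i))
    have heq : ∀ ω, (A i).indicator (fun ω => ENNReal.ofReal (L i ω)) ω
        = ((fun ω => ENNReal.ofReal (L i ω))
            * fun ω => C.indicator (fun _ => (1 : ℝ≥0∞)) (V ω)) ω := by
      intro ω
      by_cases h : ω ∈ A i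
      · have hVC : V ω ∈ C := by rw [hAeq] at h; exact h
        rw [indicator_of_mem h]
        simp [hVC]
      · have hVC : V ω ∉ C := by rw [hAeq] at h; exact h
        rw [indicator_of_notMem h]
        simp [hVC]
    rw [lintegral_congr heq,
      lintegral_mul_eq_lintegral_mul_lintegral_of_indepFun
        ((hLmeas i).ennreal_ofReal)
        (show Measurable fun ω => C.indicator (fun _ => (1 : ℝ≥0∞)) (V ω) from
          (measurable_const.indicator (measC i)).comp hVmeas) hind2]
    congr 1
    · exact ((hid i).comp ENNReal.measurable_ofReal).lintegral_eq
    · have : (fun ω => C.indicator (fun _ => (1 : ℝ≥0∞)) (V ω))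
          = (V ⁻¹' C).indicator (fun _ => (1 : ℝ≥0∞)) := by
        funext ω
        by_cases h : V ω ∈ C
        · simp [Set.indicator_apply, Set.mem_preimage, h]
        · simp [Set.indicator_apply, Set.mem_preimage, h]
      rw [this, lintegral_indicator_const (hVmeas (measC i)), one_mul, hAeq]
  -- The exceptional null set
  have hN : P (⋂ i, A i) = 0 := by
    have hle : ∀ n : ℕ, P (⋂ i, A i) ≤ ∫⁻ z, (q z) ^ n ∂(P.map D) := fun n =>
      (measure_mono (iInter_subset _ n)).trans_eq (keyA n)
    have hprob : IsProbabilityMeasure (P.map D) := Measure.isProbabilityMeasure_map hDmeas.aemeasurable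
    have htend : Tendsto (fun n => ∫⁻ z, (q z) ^ n ∂(P.map D)) atTop (𝓝 0) := by
      have key := tendsto_lintegral_of_dominated_convergence (μ := P.map D)
        (F := fun n z => (q z) ^ n) (f := fun _ => 0) (fun _ => (1 : ℝ≥0∞))
        (fun n => hqmeas.pow_const n)
        (fun n => ae_of_all _ fun z => pow_le_one' (hqle z) n)
        (by simp)
        (by
          have hz : ∀ᵐ z ∂(P.map D), z ∈ Ici (0 : ℝ) :=
            (ae_map_iff hDmeas.aemeasurable measurableSet_Ici).mpr (ae_of_all _ hDnn)
          filter_upwards [hz] with z hz0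
          exact ENNReal.tendsto_pow_atTop_nhds_zero_of_lt_one (hqlt z hz0))
      simpa using key
    have : P (⋂ i, A i) ≤ 0 := ge_of_tendsto htend (Eventually.of_forall hle)
    exact nonpos_iff_eq_zero.mp this
  -- a.e. agreement of {i ≤ τ} with A i
  have hBA : ∀ᵐ ω ∂P, ∀ i : ℕ,
      ({ω | i ≤ τ ω}).indicator (fun ω => ENNReal.ofReal (L i ω)) ω
        = (A i).indicator (fun ω => ENNReal.ofReal (L i ω)) ω := by
    have hNae : ∀ᵐ ω ∂P, ω ∉ ⋂ i, A i := by
      rw [ae_iff]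
      have hs : {a | ¬ a ∉ ⋂ i, A i} = ⋂ i, A i := by ext a; simp
      rw [hs]
      exact hN
    filter_upwards [hNae] with ω hω i
    have hSne : {k : ℕ | D ω < L k ω}.Nonempty := by
      have : ∃ n, ω ∉ A n := by simpa [mem_iInter] using hω
      obtain ⟨n, hn⟩ := this
      have : ∃ j, j < n ∧ ¬ L j ω ≤ D ω := by
        by_contra hall
        push_neg at hall
        exact hn fun j hj => hall j hj
      obtain ⟨j, _, hj⟩ := this
      exact ⟨j, not_le.mp hj⟩
    by_cases hmem : ω ∈ A i
    · have hBmem : ω ∈ {ω | i ≤ τ ω} := by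
        show i ≤ τ ω
        rw [hτ ω]
        by_contra hlt
        push_neg at hlt
        have hmemS := Nat.sInf_mem hSne
        exact absurd hmemS (not_lt.mpr (hmem _ hlt))
      rw [indicator_of_mem hmem, indicator_of_mem hBmem]
    · have hBmem : ω ∉ {ω | i ≤ τ ω} := by
        intro hB
        apply hmem
        intro j hj
        have hji : j < τ ω := lt_of_lt_of_le hj hB
        rw [hτ ω] at hji
        exact not_lt.mp (Nat.notMem_of_lt_sInf hji)
      rw [indicator_of_notMem hmem, indicator_of_notMem hBmem]
  -- decompose the lintegral of T
  have hpt : ∀ ω, ENNReal.ofReal (T ω)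
      = ∑' i : ℕ, ({ω | i ≤ τ ω}).indicator (fun ω => ENNReal.ofReal (L i ω)) ω := by
    intro ω
    have h1 : (∑' i : ℕ, ({ω' | i ≤ τ ω'}).indicator (fun ω' => ENNReal.ofReal (L i ω')) ω)
        = ∑ i ∈ Finset.range (τ ω + 1),
            ({ω' | i ≤ τ ω'}).indicator (fun ω' => ENNReal.ofReal (L i ω')) ω :=
      tsum_eq_sum (fun i hi => indicator_of_notMem
        (show ω ∉ {ω' | i ≤ τ ω'} from
          fun h => hi (Finset.mem_range.mpr (Nat.lt_succ_of_le h)))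
        (fun ω' => ENNReal.ofReal (L i ω')))
    rw [hT ω, ENNReal.ofReal_sum_of_nonneg (fun i _ => hLnn i ω), h1]
    exact Finset.sum_congr rfl fun i hi => (indicator_of_mem
      (show ω ∈ {ω' | i ≤ τ ω'} from Nat.lt_succ_iff.mp (Finset.mem_range.mp hi))
      (fun ω' => ENNReal.ofReal (L i ω'))).symm
  have hTdecomp : ∫⁻ ω, ENNReal.ofReal (T ω) ∂P
      = ∑' i : ℕ, ∫⁻ ω, (A i).indicator (fun ω => ENNReal.ofReal (L i ω)) ω ∂P := by
    rw [show ∫⁻ ω, ENNReal.ofReal (T ω) ∂P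
        = ∫⁻ ω, ∑' i : ℕ, (A i).indicator (fun ω => ENNReal.ofReal (L i ω)) ω ∂P from
      lintegral_congr_ae (by
        filter_upwards [hBA] with ω hω
        rw [hpt ω]
        exact tsum_congr fun i => hω i)]
    exact lintegral_tsum fun i =>
      (((hLmeas i).ennreal_ofReal).indicator (hAmeas i)).aemeasurable
  rw [hTdecomp]
  calc ∑' i : ℕ, ∫⁻ ω, (A i).indicator (fun ω => ENNReal.ofReal (L i ω)) ω ∂P
      = ∑' i : ℕ, (∫⁻ ω, ENNReal.ofReal (L0 ω) ∂P) * ∫⁻ z, (q z) ^ i ∂(P.map D) :=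
        tsum_congr fun i => by rw [keyB i, keyA i]
    _ = (∫⁻ ω, ENNReal.ofReal (L0 ω) ∂P) * ∑' i : ℕ, ∫⁻ z, (q z) ^ i ∂(P.map D) :=
        ENNReal.tsum_mul_left
    _ = (∫⁻ ω, ENNReal.ofReal (L0 ω) ∂P) * ∫⁻ z, ∑' i : ℕ, (q z) ^ i ∂(P.map D) := by
        rw [lintegral_tsum fun i => (hqmeas.pow_const i).aemeasurable]
    _ = (∫⁻ ω, ENNReal.ofReal (L0 ω) ∂P) * ∫⁻ z, (P {ω | z < L0 ω})⁻¹ ∂(P.map D) := by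
        congr 1
        apply lintegral_congr
        intro z
        rw [ENNReal.tsum_geometric]
        congr 1
        have : q z = 1 - P {ω | z < L0 ω} := by
          show P {ω | L0 ω ≤ z} = _
          rw [hcompl z]
          exact prob_compl_eq_one_sub (hL0meas measurableSet_Ioi)
        rw [this]
        exact ENNReal.sub_sub_cancel ENNReal.one_ne_top prob_le_one
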